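/- Refined 5-lemma (filtration form): in an abelian category, suppose given morphisms α : a → b, β : b → c, γ : c → d, θ : e → f, ι : f → g, κ : g → h, and vertical morphisms δ : a → e, ε : b → f, ζ : c → g, η : d → h, such that α·β = 0, β·γ = 0, θ·ι = 0, ι·κ = 0, the squares commute (α·ε = δ·θ, β·ζ = ε·ι, γ·η = ζ·κ), δ is an epimorphism, and η is a monomorphism. Then ker(ζ) admits a finite filtration of subobjects whose successive subquotients are isomorphic to subquotients of the three objects ker(ε), H(β,γ), and H(θ,ι). In particular, if ker(ε) = 0, H(β,γ) = 0, and H(θ,ι) = 0, then ζ is a monomorphism. -/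

import Mathlib

open CategoryTheory Limits

namespace AdelmanPaper

universe v u

variable {B : Type u} [Category.{v} B] [Abelian B]

/-- The homology `H(φ, χ) = ker(χ)/(im(φ) ∩ ker(χ))` of a (not necessarily zero-composable)
composable pair in an abelian category, realized as the image of the canonical morphism
`ker(χ) ⟶ coker(φ)`. -/
noncomputable def pairHomology {x y z : B} (φ : x ⟶ y) (χ : y ⟶ z) : B :=
  image (kernel.ι χ ≫ cokernel.π φ)

/-- `X` is a subquotient of `Y` if `X` is a quotient of a subobject of `Y`. -/
def IsSubquotient (X Y : B) : Prop :=
  ∃ (Z : B) (i : Z ⟶ Y) (p : Z ⟶ X), Mono i ∧ Epi p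

lemma IsSubquotient.isZero {X Y : B} (h : IsSubquotient X Y) (hY : IsZero Y) : IsZero X := by
  obtain ⟨Z, i, p, hi, hp⟩ := h
  exact IsZero.of_epi p (IsZero.of_mono i hY)

/-- STATEMENT 17 (refined 5-lemma, filtration form): given the commutative diagram with
`α·β = β·γ = θ·ι = ι·κ = 0`, `δ` epi and `η` mono, the kernel of `ζ` admits a finite
filtration whose successive subquotients are (isomorphic to) subquotients of the three objects
`ker(ε)`, `H(θ,ι)` and `H(β,γ)`; in particular, if these three objects are zero then `ζ` is a
monomorphism. -/
theorem refined_five_lemma_filtration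
    {a b c d e f g h : B}
    (α : a ⟶ b) (β : b ⟶ c) (γ : c ⟶ d) (θ : e ⟶ f) (ι : f ⟶ g) (κ : g ⟶ h)
    (δ : a ⟶ e) (ε : b ⟶ f) (ζ : c ⟶ g) (η : d ⟶ h)
    (hαβ : α ≫ β = 0) (hβγ : β ≫ γ = 0) (hθι : θ ≫ ι = 0) (hικ : ι ≫ κ = 0)
    (sq1 : α ≫ ε = δ ≫ θ) (sq2 : β ≫ ζ = ε ≫ ι) (sq3 : γ ≫ η = ζ ≫ κ)
    [Epi δ] [Mono η] :
    (∃ (s₁ s₂ : Subobject (kernel ζ)) (hle : s₁ ≤ s₂),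
      IsSubquotient ((s₁ : B)) (kernel ε) ∧
      IsSubquotient (cokernel (Subobject.ofLE s₁ s₂ hle)) (pairHomology θ ι) ∧
      IsSubquotient (cokernel s₂.arrow) (pairHomology β γ)) ∧
    (IsZero (kernel ε) → IsZero (pairHomology β γ) → IsZero (pairHomology θ ι) → Mono ζ) := by
  -- basic morphisms
  have hkγ : kernel.ι ζ ≫ γ = 0 := by
    rw [← cancel_mono η, Category.assoc, sq3, zero_comp, ← Category.assoc,
      kernel.condition, zero_comp]
  set q : kernel ζ ⟶ cokernel β := kernel.ι ζ ≫ cokernel.π β with hq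
  set s₂ : Subobject (kernel ζ) := kernelSubobject q with hs₂
  have hu0 : (kernel.ι ε ≫ β) ≫ ζ = 0 := by
    rw [Category.assoc, sq2, ← Category.assoc, kernel.condition, zero_comp]
  set u : kernel ε ⟶ kernel ζ := kernel.lift ζ (kernel.ι ε ≫ β) hu0 with hu
  have huk : u ≫ kernel.ι ζ = kernel.ι ε ≫ β := kernel.lift_ι _ _ _
  have huq : u ≫ q = 0 := by
    rw [hq, ← Category.assoc, huk, Category.assoc, cokernel.condition, comp_zero]
  set s₁ : Subobject (kernel ζ) := imageSubobject u with hs₁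
  have hle : s₁ ≤ s₂ := imageSubobject_le u (factorThruKernelSubobject q u huq) (factorThruKernelSubobject_comp_arrow q u huq)
  -- part 1 : s₁ is a subquotient of kernel ε
  have part1 : IsSubquotient ((s₁ : B)) (kernel ε) :=
    ⟨kernel ε, 𝟙 _, factorThruImageSubobject u, inferInstance, inferInstance⟩
  -- part 3 : cokernel s₂.arrow is a subquotient of H(β,γ)
  set w : kernel γ ⟶ cokernel β := kernel.ι γ ≫ cokernel.π β with hw
  set k' : kernel ζ ⟶ kernel γ := kernel.lift γ (kernel.ι ζ) hkγ with hk'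
  have hk'ι : k' ≫ kernel.ι γ = kernel.ι ζ := kernel.lift_ι _ _ _
  have hk'w : k' ≫ w = q := by rw [hw, ← Category.assoc, hk'ι]
  have hs₂q : s₂.arrow ≫ q = 0 := kernelSubobject_arrow_comp q
  have h₂ : s₂.arrow ≫ k' ≫ factorThruImage w = 0 := by
    rw [← cancel_mono (image.ι w)]
    simp only [Category.assoc, image.fac, zero_comp]
    rw [hk'w, hs₂q]
  set χ : cokernel s₂.arrow ⟶ image w :=
    cokernel.desc s₂.arrow (k' ≫ factorThruImage w) h₂ with hχ
  set ψ : cokernel s₂.arrow ⟶ cokernel β := cokernel.desc s₂.arrow q hs₂q with hψ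
  have hχψ : χ ≫ image.ι w = ψ := by
    rw [← cancel_epi (cokernel.π s₂.arrow)]
    simp [hχ, hψ, hk'w]
  set e₁ : cokernel s₂.arrow ≅ cokernel (kernel.ι q) :=
    cokernel.mapIso s₂.arrow (kernel.ι q) (kernelSubobjectIso q) (Iso.refl _)
      (by simp; rfl) with he₁
  have hψ' : ψ = e₁.hom ≫ Abelian.coimageImageComparison q ≫ Abelian.image.ι q := by
    rw [← cancel_epi (cokernel.π s₂.arrow)]
    rw [hψ, cokernel.π_desc, he₁]
    simp only [cokernel.mapIso_hom, cokernel.π_desc_assoc, Iso.refl_hom, Category.assoc]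
    rw [Category.id_comp]
    exact (Abelian.coimage_image_factorisation q).symm
  have monoψ : Mono ψ := by rw [hψ']; exact mono_comp _ _
  have monoχ : Mono χ := by
    have : Mono (χ ≫ image.ι w) := by rw [hχψ]; exact monoψ
    exact mono_of_mono χ (image.ι w)
  have part3 : IsSubquotient (cokernel s₂.arrow) (pairHomology β γ) :=
    ⟨cokernel s₂.arrow, χ, 𝟙 _, monoχ, inferInstance⟩
  -- part 2 : cokernel (ofLE s₁ s₂) is a subquotient of H(θ,ι)
  have hm0 : (s₂.arrow ≫ kernel.ι ζ) ≫ cokernel.π β = 0 := by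
    rw [Category.assoc, ← hq, hs₂q]
  set m' : (s₂ : B) ⟶ Abelian.image β :=
    kernel.lift (cokernel.π β) (s₂.arrow ≫ kernel.ι ζ) hm0 with hm'
  have hm'ι : m' ≫ Abelian.image.ι β = s₂.arrow ≫ kernel.ι ζ := kernel.lift_ι _ _ _
  set P := pullback (Abelian.factorThruImage β) m' with hP
  set t : P ⟶ b := pullback.fst _ _ with ht
  set sndP : P ⟶ (s₂ : B) := pullback.snd _ _ with hsndP
  have htβ : t ≫ β = sndP ≫ s₂.arrow ≫ kernel.ι ζ := by
    have := pullback.condition (f := Abelian.factorThruImage β) (g := m')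
    have h2 := congrArg (· ≫ Abelian.image.ι β) this
    simpa [Category.assoc, hm'ι, Abelian.image.fac] using h2
  have hv0 : (t ≫ ε) ≫ ι = 0 := by
    rw [Category.assoc, ← sq2, ← Category.assoc, htβ]
    simp [Category.assoc, kernel.condition]
  set v : P ⟶ kernel ι := kernel.lift ι (t ≫ ε) hv0 with hv
  have hvι : v ≫ kernel.ι ι = t ≫ ε := kernel.lift_ι _ _ _
  set w' : kernel ι ⟶ cokernel θ := kernel.ι ι ≫ cokernel.π θ with hw'
  set ρ : P ⟶ image w' := v ≫ factorThruImage w' with hρ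
  set n : kernel ρ ⟶ P := kernel.ι ρ with hn
  -- key : n ≫ sndP ≫ cokernel.π (ofLE s₁ s₂) = 0
  have hnw' : n ≫ v ≫ w' = 0 := by
    have : n ≫ ρ = 0 := kernel.condition ρ
    have h2 := congrArg (· ≫ image.ι w') this
    simpa [hρ, Category.assoc, image.fac] using h2
  have hntε : n ≫ (t ≫ ε) ≫ cokernel.π θ = 0 := by
    rw [← hvι, Category.assoc]
    simpa [hw', Category.assoc] using hnw'
  have hntε' : (n ≫ t ≫ ε) ≫ cokernel.π θ = 0 := by
    simpa [Category.assoc] using hntε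
  set m₂ : kernel ρ ⟶ Abelian.image θ :=
    kernel.lift (cokernel.π θ) (n ≫ t ≫ ε) hntε' with hm₂
  have hm₂ι : m₂ ≫ Abelian.image.ι θ = n ≫ t ≫ ε := kernel.lift_ι _ _ _
  haveI : Epi (δ ≫ Abelian.factorThruImage θ) := epi_comp _ _
  set Q := pullback (δ ≫ Abelian.factorThruImage θ) m₂ with hQdef
  set fstQ : Q ⟶ a := pullback.fst _ _ with hfstQ
  set sndQ : Q ⟶ kernel ρ := pullback.snd _ _ with hsndQ
  have hQ : fstQ ≫ δ ≫ θ = sndQ ≫ n ≫ t ≫ ε := by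
    have h1 := pullback.condition (f := δ ≫ Abelian.factorThruImage θ) (g := m₂)
    have h2 := congrArg (· ≫ Abelian.image.ι θ) h1
    simpa [Category.assoc, hm₂ι, Abelian.image.fac] using h2
  have hψ0 : (sndQ ≫ n ≫ t - fstQ ≫ α) ≫ ε = 0 := by
    rw [Preadditive.sub_comp, sub_eq_zero]
    simp only [Category.assoc, sq1]
    simpa [Category.assoc] using hQ.symm
  set ψQ : Q ⟶ kernel ε := kernel.lift ε (sndQ ≫ n ≫ t - fstQ ≫ α) hψ0 with hψQ
  have hψQι : ψQ ≫ kernel.ι ε = sndQ ≫ n ≫ t - fstQ ≫ α := kernel.lift_ι _ _ _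
  have hβcalc : (sndQ ≫ n ≫ t) ≫ β = ψQ ≫ u ≫ kernel.ι ζ := by
    have : (sndQ ≫ n ≫ t) ≫ β = (ψQ ≫ kernel.ι ε) ≫ β + (fstQ ≫ α) ≫ β := by
      rw [hψQι, Preadditive.sub_comp]
      abel
    rw [this, Category.assoc, Category.assoc, hαβ, comp_zero, add_zero,
      ← huk, ← Category.assoc]
  have hkey0 : sndQ ≫ n ≫ sndP ≫ s₂.arrow = ψQ ≫ u := by
    rw [← cancel_mono (kernel.ι ζ)]
    have lhs : (sndQ ≫ n ≫ sndP ≫ s₂.arrow) ≫ kernel.ι ζ = (sndQ ≫ n ≫ t) ≫ β := by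
      simp only [Category.assoc]
      rw [← htβ]
    rw [lhs, hβcalc, Category.assoc]
  have hkey1 : sndQ ≫ n ≫ sndP =
      (ψQ ≫ factorThruImageSubobject u) ≫ Subobject.ofLE s₁ s₂ hle := by
    rw [← cancel_mono s₂.arrow]
    simp only [Category.assoc, Subobject.ofLE_arrow]
    have hfa : factorThruImageSubobject u ≫ s₁.arrow = u := imageSubobject_arrow_comp u
    rw [hfa]
    simpa [Category.assoc] using hkey0
  have hkey : kernel.ι ρ ≫ sndP ≫ cokernel.π (Subobject.ofLE s₁ s₂ hle) = 0 := by
    have h1 : sndQ ≫ n ≫ sndP ≫ cokernel.π (Subobject.ofLE s₁ s₂ hle) = 0 := by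
      rw [← Category.assoc, ← Category.assoc]
      rw [show (sndQ ≫ n) ≫ sndP = sndQ ≫ n ≫ sndP from Category.assoc _ _ _, hkey1]
      simp [Category.assoc, cokernel.condition]
    have := zero_of_epi_comp sndQ (by simpa [Category.assoc] using h1)
    simpa [hn, Category.assoc] using this
  set g0 : P ⟶ cokernel (Subobject.ofLE s₁ s₂ hle) :=
    sndP ≫ cokernel.π (Subobject.ofLE s₁ s₂ hle) with hg0
  set dd : cokernel (kernel.ι ρ) ⟶ cokernel (Subobject.ofLE s₁ s₂ hle) :=
    cokernel.desc (kernel.ι ρ) g0 hkey with hdd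
  set φ : image ρ ⟶ cokernel (Subobject.ofLE s₁ s₂ hle) :=
    (Abelian.coimageIsoImage' ρ).inv ≫ dd with hφ
  have hfacφ : factorThruImage ρ ≫ φ = g0 := by
    rw [hφ, ← Category.assoc, Abelian.factorThruImage_comp_coimageIsoImage'_inv, hdd,
      cokernel.π_desc]
  haveI : Epi g0 := epi_comp _ _
  have epiφ : Epi φ := by
    haveI : Epi (factorThruImage ρ ≫ φ) := by rw [hfacφ]; infer_instance
    exact epi_of_epi (factorThruImage ρ) φ
  have part2 : IsSubquotient (cokernel (Subobject.ofLE s₁ s₂ hle)) (pairHomology θ ι) :=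
    ⟨image ρ, image.ι ρ, φ, (Image.monoFactorisation ρ).m_mono, epiφ⟩
  refine ⟨⟨s₁, s₂, hle, part1, part2, part3⟩, ?_⟩
  intro h1 h2 h3
  have z1 : IsZero ((s₁ : B)) := part1.isZero h1
  have z2 : IsZero (cokernel (Subobject.ofLE s₁ s₂ hle)) := part2.isZero h3
  have z3 : IsZero (cokernel s₂.arrow) := part3.isZero h2
  haveI e2 : Epi (Subobject.ofLE s₁ s₂ hle) :=
    Abelian.epi_of_cokernel_π_eq_zero _ (z2.eq_of_tgt _ _)
  have zs₂ : IsZero ((s₂ : B)) := IsZero.of_epi (Subobject.ofLE s₁ s₂ hle) z1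
  haveI e3 : Epi s₂.arrow :=
    Abelian.epi_of_cokernel_π_eq_zero _ (z3.eq_of_tgt _ _)
  have zK : IsZero (kernel ζ) := IsZero.of_epi s₂.arrow zs₂
  exact Abelian.mono_of_kernel_ι_eq_zero ζ (zK.eq_of_src _ _)

end AdelmanPaper
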